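/- For every positive integer d there exist a finite connected multigraph (V, E, o, t, inv) and a 1-form m : E → ℝ^d taking values in ℤ^d, with #supp m = 2d and with the set of fluxes of m along all closed walks equal to ℤ^d, such that for every potential Q : V → ℝ and every 1-form φ : E → ℝ, the Lebesgue measure of the set Σ = { x ∈ ℝ : x is an eigenvalue of Δ_{m,φ}(θ) + Q for some θ ∈ ℝ^d } equals 4d = 2·#supp m; in particular the spectral estimate |Σ| ≤ 2·#supp m becomes an identity for this multigraph, for any Q and φ. (Paper: Theorem 2.5(iii) and Proposition 5.2(ii), at the level of fiber operators.) -/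

import Mathlib

open scoped Classical
open Finset

noncomputable section

/-- The degree of a vertex: the number of oriented edges starting at it. -/
def mdeg {V E : Type} [Fintype E] (o : E → V) (v : V) : ℕ :=
  (Finset.univ.filter fun e => o e = v).card

/-- The combinatorial magnetic Laplacian `Δ_α`. -/
def magLap {V E : Type} [Fintype E] (o t : E → V) (α : E → ℝ)
    (f : V → ℂ) (v : V) : ℂ :=
  ∑ e ∈ Finset.univ.filter (fun e => o e = v),
    (f v - Complex.exp (Complex.I * (α e : ℂ)) * f (t e))

/-- The fiber magnetic Laplacian `Δ_{m,φ}(θ)`. -/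
def fiberLap {V E : Type} [Fintype E] {d : ℕ} (o t : E → V)
    (m : E → Fin d → ℝ) (φ : E → ℝ) (θ : Fin d → ℝ) (f : V → ℂ) (v : V) : ℂ :=
  (mdeg o v : ℂ) * f v -
    ∑ e ∈ Finset.univ.filter (fun e => o e = v),
      Complex.exp (Complex.I * ((φ e + ∑ i, m e i * θ i : ℝ) : ℂ)) * f (t e)

/-- Standard inner product on `ℂ^V` (conjugate-linear in the first argument). -/
def dotC {V : Type} [Fintype V] (f g : V → ℂ) : ℂ :=
  ∑ v, (starRingEnd ℂ) (f v) * g v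

/-- `lam` lists the eigenvalues of the operator `T` on `ℂ^V` in nondecreasing
order, counted with multiplicity (witnessed by an orthonormal eigenbasis). -/
def IsEigList {V : Type} [Fintype V] (T : (V → ℂ) → (V → ℂ))
    (lam : Fin (Fintype.card V) → ℝ) : Prop :=
  Monotone lam ∧ ∃ u : Fin (Fintype.card V) → (V → ℂ),
    (∀ i j, dotC (u i) (u j) = if i = j then (1 : ℂ) else 0) ∧
    ∀ i, T (u i) = fun v => ((lam i : ℝ) : ℂ) * u i v

/-- A closed walk in the multigraph. -/
def IsClosedWalk {V E : Type} (o t : E → V) {k : ℕ} (c : Fin (k + 1) → E) : Prop :=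
  (∀ i : Fin k, t (c i.castSucc) = o (c i.succ)) ∧ t (c (Fin.last k)) = o (c 0)

/-- Two forms have the same flux along every closed walk. -/
def SameFlux {V E W : Type} [AddCommMonoid W] (o t : E → V) (b b' : E → W) : Prop :=
  ∀ (k : ℕ) (c : Fin (k + 1) → E), IsClosedWalk o t c →
    ∑ i, b (c i) = ∑ i, b' (c i)

/-- Connectivity of the multigraph: any two distinct vertices are the endpoints
of some walk. -/
def MGConnected {V E : Type} (o t : E → V) : Prop :=
  ∀ u v : V, u ≠ v → ∃ (k : ℕ) (c : Fin (k + 1) → E),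
    (∀ i : Fin k, t (c i.castSucc) = o (c i.succ)) ∧ o (c 0) = u ∧ t (c (Fin.last k)) = v

/-- The set of fluxes of a form along all closed walks. -/
def fluxSet {V E W : Type} [AddCommMonoid W] (o t : E → V) (b : E → W) : Set W :=
  {w | ∃ (k : ℕ) (c : Fin (k + 1) → E), IsClosedWalk o t c ∧ ∑ i, b (c i) = w}

/-- The number of oriented edges in the support of a form. -/
def suppCard {E : Type} [Fintype E] {W : Type} [Zero W] (b : E → W) : ℕ :=
  (Finset.univ.filter fun e => b e ≠ 0).card

/-- The integer lattice `ℤ^d` inside `ℝ^d`. -/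
def intLattice (d : ℕ) : Set (Fin d → ℝ) :=
  {w | ∀ i, ∃ z : ℤ, w i = (z : ℝ)}

namespace Bouquet

def eO (d : ℕ) (i : Fin d) : Fin (d + d) := finSumFinEquiv (Sum.inl i)
def eI (d : ℕ) (i : Fin d) : Fin (d + d) := finSumFinEquiv (Sum.inr i)

def bInv (d : ℕ) (e : Fin (d + d)) : Fin (d + d) :=
  finSumFinEquiv (Sum.swap (finSumFinEquiv.symm e))

def bM (d : ℕ) (e : Fin (d + d)) : Fin d → ℝ :=
  Sum.elim (fun i => Pi.single i 1) (fun i => -Pi.single i (1:ℝ)) (finSumFinEquiv.symm e)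

lemma bM_eO (d : ℕ) (i : Fin d) : bM d (eO d i) = Pi.single i 1 := by
  unfold bM eO; rw [Equiv.symm_apply_apply]; rfl

lemma bM_eI (d : ℕ) (i : Fin d) : bM d (eI d i) = -Pi.single i 1 := by
  unfold bM eI; rw [Equiv.symm_apply_apply]; rfl

lemma bInv_eO (d : ℕ) (i : Fin d) : bInv d (eO d i) = eI d i := by
  unfold bInv eO eI; rw [Equiv.symm_apply_apply]; rfl

lemma bInv_bInv (d : ℕ) (e : Fin (d + d)) : bInv d (bInv d e) = e := by
  simp [bInv]

lemma bInv_ne (d : ℕ) (e : Fin (d + d)) : bInv d e ≠ e := by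
  intro h
  apply_fun finSumFinEquiv.symm at h
  rw [bInv, Equiv.symm_apply_apply] at h
  rcases hx : finSumFinEquiv.symm e with i | i <;> rw [hx] at h <;> simp at h

lemma bM_bInv (d : ℕ) (e : Fin (d + d)) : bM d (bInv d e) = - bM d e := by
  unfold bM bInv
  rw [Equiv.symm_apply_apply]
  rcases finSumFinEquiv.symm e with i | i <;> simp

lemma bM_ne_zero (d : ℕ) (e : Fin (d + d)) : bM d e ≠ 0 := by
  unfold bM
  rcases finSumFinEquiv.symm e with i | i <;> intro h <;>
    · have := congrFun h i
      simp [Pi.single_eq_same] at this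

lemma bM_int (d : ℕ) (e : Fin (d + d)) (i : Fin d) : ∃ z : ℤ, bM d e i = (z : ℝ) := by
  unfold bM
  rcases finSumFinEquiv.symm e with j | j <;> simp [Pi.single_apply] <;> split
  · exact ⟨1, by norm_num⟩
  · exact ⟨0, by norm_num⟩
  · exact ⟨-1, by norm_num⟩
  · exact ⟨0, by norm_num⟩

end Bouquet

namespace Bouquet

lemma closed (d : ℕ) (k : ℕ) (c : Fin (k + 1) → Fin (d + d)) :
    IsClosedWalk (fun _ => (0 : Fin 1)) (fun _ => (0 : Fin 1)) c :=
  ⟨fun _ => rfl, rfl⟩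

lemma flux_eq (d : ℕ) (hd : 0 < d) :
    fluxSet (fun _ : Fin (d+d) => (0 : Fin 1)) (fun _ => (0 : Fin 1)) (bM d) = intLattice d := by
  apply Set.Subset.antisymm
  · rintro w ⟨k, c, -, hsum⟩ i
    refine ⟨∑ j, (bM_int d (c j) i).choose, ?_⟩
    rw [← hsum, Finset.sum_apply]
    push_cast
    exact Finset.sum_congr rfl fun j _ => (bM_int d (c j) i).choose_spec
  · intro w hw
    set S : AddSubmonoid (Fin d → ℝ) :=
      { carrier := fluxSet (fun _ : Fin (d+d) => (0 : Fin 1)) (fun _ => (0 : Fin 1)) (bM d)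
        zero_mem' := by
          refine ⟨1, ![eO d ⟨0, hd⟩, eI d ⟨0, hd⟩], closed d 1 _, ?_⟩
          simp [Fin.sum_univ_two, bM_eO, bM_eI]
        add_mem' := by
          rintro a b ⟨k1, c1, -, h1⟩ ⟨k2, c2, -, h2⟩
          refine ⟨k1 + 1 + k2, (Fin.append c1 c2 : Fin ((k1+1)+(k2+1)) → _), closed d _ _, ?_⟩
          show ∑ i : Fin ((k1+1)+(k2+1)), bM d (Fin.append c1 c2 i) = a + b
          rw [Fin.sum_univ_add]
          simp only [Fin.append_left, Fin.append_right, h1, h2] } with hS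
    have hsingle : ∀ e : Fin (d + d), bM d e ∈ S := by
      intro e
      exact ⟨0, ![e], closed d 0 _, by simp⟩
    have hz : ∀ (z : ℤ) (i : Fin d), (Pi.single i ((z : ℝ)) : Fin d → ℝ) ∈ S := by
      intro z i
      induction z using Int.induction_on with
      | zero => simpa using S.zero_mem
      | succ n ih =>
          have : (Pi.single i (((n : ℤ) + 1 : ℤ) : ℝ) : Fin d → ℝ)
              = Pi.single i ((n : ℤ) : ℝ) + Pi.single i (1 : ℝ) := by
            rw [← Pi.single_add]; norm_num
          rw [this]
          exact S.add_mem ih (by simpa [bM_eO] using hsingle (eO d i))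
      | pred n ih =>
          have : (Pi.single i ((-(n : ℤ) - 1 : ℤ) : ℝ) : Fin d → ℝ)
              = Pi.single i ((-(n : ℤ) : ℤ) : ℝ) + (- Pi.single i (1 : ℝ)) := by
            rw [← Pi.single_neg, ← Pi.single_add]; push_cast; ring_nf
          rw [this]
          exact S.add_mem ih (by simpa [bM_eI] using hsingle (eI d i))
    have hw' : w = ∑ i, Pi.single i (w i) := (Finset.univ_sum_single w).symm
    rw [hw']
    refine S.sum_mem fun i _ => ?_
    obtain ⟨z, hzi⟩ := hw i
    rw [hzi]
    exact hz z i

end Bouquet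

open Bouquet

/-- For every `d > 0` there is a finite connected multigraph with an
integer-valued 1-form `m : E → ℝ^d` with `#supp m = 2d` and flux set `ℤ^d`,
such that for every potential `Q` and every 1-form `φ` the Lebesgue measure of
the union over `θ` of the spectra of `Δ_{m,φ}(θ) + Q` equals
`4d = 2·#supp m`; i.e. the spectral estimate becomes an identity. -/
theorem exists_graph_measure_identity (d : ℕ) (hd : 0 < d) :
    ∃ (nv ne : ℕ) (o t : Fin ne → Fin nv) (inv : Fin ne → Fin ne),
      0 < nv ∧
      (∀ e, inv e ≠ e) ∧ (∀ e, inv (inv e) = e) ∧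
      (∀ e, o (inv e) = t e) ∧ (∀ e, t (inv e) = o e) ∧
      MGConnected o t ∧
      ∃ m : Fin ne → Fin d → ℝ,
        (∀ e, m (inv e) = - m e) ∧
        (∀ e i, ∃ z : ℤ, m e i = (z : ℝ)) ∧
        suppCard m = 2 * d ∧
        fluxSet o t m = intLattice d ∧
        ∀ (Q : Fin nv → ℝ) (φ : Fin ne → ℝ), (∀ e, φ (inv e) = - φ e) →
          MeasureTheory.volume
            {x : ℝ | ∃ (θ : Fin d → ℝ) (f : Fin nv → ℂ), f ≠ 0 ∧
              ∀ v, fiberLap o t m φ θ f v + (Q v : ℂ) * f v = (x : ℂ) * f v}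
            = ((4 * d : ℕ) : ENNReal) := by
  refine ⟨1, d + d, (fun _ => 0), (fun _ => 0), bInv d, Nat.one_pos,
    bInv_ne d, bInv_bInv d, (fun _ => rfl), (fun _ => rfl),
    (fun u v h => absurd (Subsingleton.elim u v) h), bM d,
    bM_bInv d, bM_int d, ?_, flux_eq d hd, ?_⟩
  · have h1 : ∀ e : Fin (d+d), bM d e ≠ 0 := bM_ne_zero d
    simp [suppCard, h1, two_mul]
  intro Q φ hφ
  have hd' : (0:ℝ) < d := by exact_mod_cast hd
  have h2d : (0:ℝ) < 2 * d := by linarith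
  have hφ' : ∀ i : Fin d, φ (finSumFinEquiv (Sum.inr i)) = -φ (eO d i) := by
    intro i
    have := hφ (eO d i)
    rw [bInv_eO d i] at this
    exact this
  have hmdeg : mdeg (fun _ : Fin (d+d) => (0 : Fin 1)) 0 = d + d := by
    simp [mdeg]
  have hpair : ∀ a : ℝ, Complex.exp (Complex.I * (a:ℂ)) +
      Complex.exp (Complex.I * ((-a : ℝ):ℂ)) = ((2 * Real.cos a : ℝ) : ℂ) := by
    intro a
    push_cast
    rw [Complex.two_cos]
    ring_nf
  have hsum : ∀ θ : Fin d → ℝ,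
      (∑ e : Fin (d+d), Complex.exp (Complex.I * ((φ e + ∑ i, bM d e i * θ i : ℝ) : ℂ)))
      = ((2 * ∑ i, Real.cos (φ (eO d i) + θ i) : ℝ) : ℂ) := by
    intro θ
    rw [← Equiv.sum_comp finSumFinEquiv
      (fun e => Complex.exp (Complex.I * ((φ e + ∑ i, bM d e i * θ i : ℝ) : ℂ))),
      Fintype.sum_sum_type]
    have hO : ∀ i : Fin d, ∑ j, bM d (finSumFinEquiv (Sum.inl i)) j * θ j = θ i := by
      intro i
      rw [show (finSumFinEquiv (Sum.inl i) : Fin (d+d)) = eO d i from rfl, bM_eO]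
      simp [Pi.single_apply]
    have hI : ∀ i : Fin d, ∑ j, bM d (finSumFinEquiv (Sum.inr i)) j * θ j = -θ i := by
      intro i
      rw [show (finSumFinEquiv (Sum.inr i) : Fin (d+d)) = eI d i from rfl, bM_eI]
      simp [Pi.single_apply]
    rw [← Finset.sum_add_distrib, Finset.mul_sum, Complex.ofReal_sum]
    refine Finset.sum_congr rfl fun i _ => ?_
    simp only [hO, hI, hφ']
    rw [show (-φ (eO d i) + -θ i : ℝ) = -(φ (eO d i) + θ i) by ring]
    exact hpair _
  have hfiber : ∀ (θ : Fin d → ℝ) (f : Fin 1 → ℂ),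
      fiberLap (fun _ : Fin (d+d) => (0 : Fin 1)) (fun _ => 0) (bM d) φ θ f 0
        = ((d + d : ℕ) : ℂ) * f 0
          - ((2 * ∑ i, Real.cos (φ (eO d i) + θ i) : ℝ) : ℂ) * f 0 := by
    intro θ f
    rw [fiberLap, hmdeg]
    congr 1
    rw [← hsum θ, Finset.sum_mul]
    refine Finset.sum_congr (by simp) (fun e _ => rfl)
  have hsumle : ∀ θ : Fin d → ℝ, ∑ i, Real.cos (φ (eO d i) + θ i) ≤ d := by
    intro θ
    calc ∑ i, Real.cos (φ (eO d i) + θ i) ≤ ∑ _i : Fin d, (1:ℝ) :=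
          Finset.sum_le_sum fun i _ => Real.cos_le_one _
      _ = d := by simp
  have hsumge : ∀ θ : Fin d → ℝ, -(d:ℝ) ≤ ∑ i, Real.cos (φ (eO d i) + θ i) := by
    intro θ
    calc (-(d:ℝ)) = ∑ _i : Fin d, (-1:ℝ) := by simp
      _ ≤ ∑ i, Real.cos (φ (eO d i) + θ i) :=
          Finset.sum_le_sum fun i _ => Real.neg_one_le_cos _
  have hset : {x : ℝ | ∃ (θ : Fin d → ℝ) (f : Fin 1 → ℂ), f ≠ 0 ∧
        ∀ v, fiberLap (fun _ : Fin (d+d) => (0 : Fin 1)) (fun _ => 0) (bM d) φ θ f v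
          + (Q v : ℂ) * f v = (x : ℂ) * f v}
      = Set.Icc (Q 0) (Q 0 + 4 * d) := by
    ext x
    simp only [Set.mem_setOf_eq, Set.mem_Icc]
    constructor
    · rintro ⟨θ, f, hf, h⟩
      have hf0 : f 0 ≠ 0 := by
        intro h0
        apply hf
        funext v
        rw [Subsingleton.elim v 0]
        exact h0
      have h0 := h 0
      rw [hfiber θ f] at h0
      have hzero : (((d + d : ℕ) : ℂ)
          - ((2 * ∑ i, Real.cos (φ (eO d i) + θ i) : ℝ) : ℂ) + ((Q 0 : ℝ) : ℂ)
          - ((x : ℝ) : ℂ)) * f 0 = 0 := by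
        linear_combination h0
      rcases mul_eq_zero.mp hzero with h' | h'
      swap
      · exact absurd h' hf0
      have hre : ((d:ℝ) + d) - 2 * ∑ i, Real.cos (φ (eO d i) + θ i) + Q 0 - x = 0 := by
        exact_mod_cast h'
      have h1 := hsumle θ
      have h2 := hsumge θ
      constructor <;> linarith
    · rintro ⟨hx1, hx2⟩
      set cst : ℝ := (Q 0 + 2*d - x) / (2*d) with hc
      have hc1 : cst ≤ 1 := by rw [hc, div_le_one h2d]; linarith
      have hc2 : -1 ≤ cst := by rw [hc, le_div_iff₀ h2d]; linarith
      refine ⟨fun i => Real.arccos cst - φ (eO d i), fun _ => 1, ?_, ?_⟩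
      · intro h0
        simpa using congrFun h0 0
      · intro v
        rw [Subsingleton.elim v 0, hfiber]
        have hcos : ∀ i : Fin d,
            Real.cos (φ (eO d i) + (Real.arccos cst - φ (eO d i))) = cst := by
          intro i
          rw [show φ (eO d i) + (Real.arccos cst - φ (eO d i)) = Real.arccos cst by ring,
            Real.cos_arccos hc2 hc1]
        simp only [hcos, Finset.sum_const, Finset.card_univ, Fintype.card_fin,
          nsmul_eq_mul, mul_one]
        have key : ((d:ℝ) + d) - 2 * (↑d * cst) + Q 0 = x := by
          have h2 : 2 * ((d:ℝ) * cst) = Q 0 + 2*↑d - x := by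
            rw [hc]
            field_simp
          linarith
        push_cast
        rw [← key]
        push_cast
        ring
  rw [hset, Real.volume_Icc,
    show Q 0 + 4 * (d:ℝ) - Q 0 = ((4 * d : ℕ) : ℝ) by push_cast; ring,
    ENNReal.ofReal_natCast]
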